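/- Let V_cc be a finite set of links, where each link v has a transmitter t(v) and receiver r(v) in the plane, with positive distances. Define N(v) = (N0·γ/P)·d(t(v),r(v))^α and for distinct links u,v define w(u,v) = max(0, 1 - γ·d(t(v),r(v))^α / d(t(u),r(v))^α). If for every v ∈ V_cc we have ∑_{u ∈ V_cc, u ≠ v} w(u,v) > |V_cc| + N(v) - 2, then for every v ∈ V_cc the SINR condition holds: (P / d(t(v),r(v))^α) / (N0 + ∑_{u ≠ v} P / d(t(u),r(v))^α) > γ. -/

import Mathlib

/-- LGLS correctness (Theorem 1, no shared nodes case): if for every link `v` in the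
finite co-colored set `V`, the sum of co-schedulability weights
`w'(u,v) = max 0 (1 - γ·d(t v, r v)^α / d(t u, r v)^α)` over the other links exceeds
`|V| + N(v) - 2`, where `N(v) = (N0·γ/P)·d(t v, r v)^α`, then the SINR condition holds
at every receiver. -/
theorem lgls_feasible
    {ι : Type*} [DecidableEq ι] (V : Finset ι)
    (t r : ι → EuclideanSpace ℝ (Fin 2))
    (P N0 γ α : ℝ) (hP : 0 < P) (hN0 : 0 < N0) (hγ : 0 < γ) (hα : 0 < α)
    (hd : ∀ u ∈ V, ∀ v ∈ V, 0 < dist (t u) (r v))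
    (h : ∀ v ∈ V,
      ∑ u ∈ V.erase v, max 0 (1 - γ * dist (t v) (r v) ^ α / dist (t u) (r v) ^ α)
        > (V.card : ℝ) + (N0 * γ / P) * dist (t v) (r v) ^ α - 2) :
    ∀ v ∈ V,
      (P / dist (t v) (r v) ^ α) /
        (N0 + ∑ u ∈ V.erase v, P / dist (t u) (r v) ^ α) > γ := by
  intro v hv
  have hDpos : (0:ℝ) < dist (t v) (r v) ^ α := Real.rpow_pos_of_pos (hd v hv v hv) α
  set D := dist (t v) (r v) ^ α with hDdef
  set x : ι → ℝ := fun u => γ * D / dist (t u) (r v) ^ α with hxdef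
  set N : ℝ := N0 * γ / P * D with hNdef
  have hNpos : 0 < N := by positivity
  have hdu : ∀ u ∈ V.erase v, (0:ℝ) < dist (t u) (r v) ^ α := fun u hu =>
    Real.rpow_pos_of_pos (hd u (Finset.mem_of_mem_erase hu) v hv) α
  have hxpos : ∀ u ∈ V.erase v, 0 < x u := fun u hu =>
    div_pos (by positivity) (hdu u hu)
  have hmin : ∀ u, (1:ℝ) - max 0 (1 - x u) = min 1 (x u) := by
    intro u
    rcases le_total (x u) 1 with h1 | h1
    · rw [max_eq_right (by linarith), min_eq_right h1]; ring
    · rw [max_eq_left (by linarith), min_eq_left h1]; ring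
  have hcard : ((V.erase v).card : ℝ) = (V.card : ℝ) - 1 :=
    Finset.cast_card_erase_of_mem hv
  have h2 := h v hv
  have hsum : ∑ u ∈ V.erase v, min 1 (x u) < 1 - N := by
    have e1 : ∑ u ∈ V.erase v, min 1 (x u)
        = ((V.erase v).card : ℝ) - ∑ u ∈ V.erase v, max 0 (1 - x u) := by
      have := Finset.sum_congr rfl fun u (_ : u ∈ V.erase v) => (hmin u).symm
      rw [this, Finset.sum_sub_distrib, Finset.sum_const, nsmul_eq_mul, mul_one]
    rw [e1, hcard]
    linarith
  have hxlt : ∀ u ∈ V.erase v, x u < 1 := by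
    intro u hu
    by_contra hc
    push_neg at hc
    have hle : min 1 (x u) ≤ ∑ w ∈ V.erase v, min 1 (x w) :=
      Finset.single_le_sum (f := fun w => min 1 (x w))
        (fun w hw => le_min zero_le_one (le_of_lt (hxpos w hw))) hu
    rw [min_eq_left hc] at hle
    linarith
  have hsumx : ∑ u ∈ V.erase v, x u < 1 - N := by
    have : ∑ u ∈ V.erase v, x u = ∑ u ∈ V.erase v, min 1 (x u) :=
      Finset.sum_congr rfl fun u hu => (min_eq_right (le_of_lt (hxlt u hu))).symm
    rw [this]; exact hsum
  have hdenom : 0 < N0 + ∑ u ∈ V.erase v, P / dist (t u) (r v) ^ α := by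
    have : 0 ≤ ∑ u ∈ V.erase v, P / dist (t u) (r v) ^ α :=
      Finset.sum_nonneg fun u hu => le_of_lt (div_pos hP (hdu u hu))
    linarith
  rw [gt_iff_lt, lt_div_iff₀ hdenom]
  have key : γ * (N0 + ∑ u ∈ V.erase v, P / dist (t u) (r v) ^ α)
      = (P / D) * (N + ∑ u ∈ V.erase v, x u) := by
    rw [mul_add, mul_add, Finset.mul_sum, Finset.mul_sum]
    congr 1
    · rw [hNdef]
      field_simp
    · apply Finset.sum_congr rfl
      intro u hu
      have hne : dist (t u) (r v) ^ α ≠ 0 := ne_of_gt (hdu u hu)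
      simp only [hxdef]
      field_simp
  rw [key]
  calc (P / D) * (N + ∑ u ∈ V.erase v, x u) < (P / D) * 1 :=
        mul_lt_mul_of_pos_left (by linarith) (div_pos hP hDpos)
    _ = P / D := mul_one _
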